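/- Let V, Q, W be vector spaces with dim Q = 3 and dim W > 0 and dim V ≥ 2, and suppose curvature operators R^V, R^Q, R^W on the vector space T = (V ⊗ Q) ⊕ W satisfy the algebraic first Bianchi identity for the operator R = (R^V ⊗ id + id ⊗ R^Q) ⊕ R^W acting on T, where moreover R^Q(X,Y)J ⟂ J for all X,Y ∈ T and J ∈ Q (with respect to a given inner product on Q). Then R^Q(X,Y) = 0 for all X, Y ∈ W. -/
import Mathlib


open TensorProduct Module RealInnerProductSpace

/-- Let `V, Q, W` be real vector spaces with `dim Q = 3`,
`dim W > 0`, `dim V ≥ 2`, `Q` carrying an inner product. Suppose curvature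
operators `R^V, R^Q, R^W` on `T = (V ⊗ Q) ⊕ W` are such that
`R = (R^V ⊗ id + id ⊗ R^Q) ⊕ R^W` satisfies the algebraic first Bianchi identity
on `T`, and `R^Q(X,Y)J ⟂ J` for all `X, Y ∈ T`, `J ∈ Q`. Then `R^Q(X,Y) = 0` for
all `X, Y ∈ W`. -/
theorem RQ_vanishes_on_W
    {V W : Type*} [AddCommGroup V] [Module ℝ V] [AddCommGroup W] [Module ℝ W]
    {Q : Type*} [NormedAddCommGroup Q] [InnerProductSpace ℝ Q]
    [FiniteDimensional ℝ V] [FiniteDimensional ℝ Q] [FiniteDimensional ℝ W]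
    (hQ : finrank ℝ Q = 3) (hW : 0 < finrank ℝ W) (hV : 2 ≤ finrank ℝ V)
    (RV : ((V ⊗[ℝ] Q) × W) →ₗ[ℝ] ((V ⊗[ℝ] Q) × W) →ₗ[ℝ] Module.End ℝ V)
    (RQ : ((V ⊗[ℝ] Q) × W) →ₗ[ℝ] ((V ⊗[ℝ] Q) × W) →ₗ[ℝ] Module.End ℝ Q)
    (RW : ((V ⊗[ℝ] Q) × W) →ₗ[ℝ] ((V ⊗[ℝ] Q) × W) →ₗ[ℝ] Module.End ℝ W)
    (hAltV : ∀ t, RV t t = 0) (hAltQ : ∀ t, RQ t t = 0) (hAltW : ∀ t, RW t t = 0)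
    -- the combined curvature operator
    (Rfull : ((V ⊗[ℝ] Q) × W) → ((V ⊗[ℝ] Q) × W) →
      ((V ⊗[ℝ] Q) × W) →ₗ[ℝ] ((V ⊗[ℝ] Q) × W))
    (hRfull : ∀ x y, Rfull x y =
      LinearMap.prodMap
        (TensorProduct.map (RV x y) LinearMap.id + TensorProduct.map LinearMap.id (RQ x y))
        (RW x y))
    -- the algebraic first Bianchi identity
    (hBianchi : ∀ x y z : (V ⊗[ℝ] Q) × W,
      Rfull x y z + Rfull y z x + Rfull z x y = 0)
    -- `R^Q(X,Y)J` is orthogonal to `J`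
    (hperp : ∀ (x y : (V ⊗[ℝ] Q) × W) (J : Q), ⟪RQ x y J, J⟫ = 0) :
    ∀ w₁ w₂ : W, RQ ((0 : V ⊗[ℝ] Q), w₁) ((0 : V ⊗[ℝ] Q), w₂) = 0 := by
  intro w₁ w₂
  set X : (V ⊗[ℝ] Q) × W := ((0 : V ⊗[ℝ] Q), w₁) with hX
  set Y : (V ⊗[ℝ] Q) × W := ((0 : V ⊗[ℝ] Q), w₂) with hY
  have hVnt : Nontrivial V := by
    have : 0 < finrank ℝ V := lt_of_lt_of_le (by norm_num) hV
    exact Module.nontrivial_of_finrank_pos this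
  obtain ⟨u, hu⟩ := exists_ne (0 : V)
  ext J
  -- Bianchi with z = (u ⊗ J, 0)
  set Z : (V ⊗[ℝ] Q) × W := (u ⊗ₜ[ℝ] J, (0 : W)) with hZ
  have hB := hBianchi X Y Z
  have h1 : ((Rfull X Y Z + Rfull Y Z X + Rfull Z X Y).1 : V ⊗[ℝ] Q) = 0 := by
    rw [hB]; rfl
  have key : (RV X Y u) ⊗ₜ[ℝ] J + u ⊗ₜ[ℝ] (RQ X Y J) = 0 := by
    have e1 : (Rfull X Y Z).1 = (RV X Y u) ⊗ₜ[ℝ] J + u ⊗ₜ[ℝ] (RQ X Y J) := by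
      rw [hRfull]; simp [hZ, TensorProduct.map_tmul]
    have e2 : (Rfull Y Z X).1 = 0 := by
      rw [hRfull]; simp [hX]
    have e3 : (Rfull Z X Y).1 = 0 := by
      rw [hRfull]; simp [hY]
    rw [Prod.fst_add, Prod.fst_add, e1, e2, e3, add_zero, add_zero] at h1
    exact h1
  -- contract with inner product against RQ X Y J
  set a : Q := RQ X Y J with ha
  by_contra hne
  have hne' : a ≠ 0 := by simpa [ha] using hne
  let f : Q →ₗ[ℝ] ℝ := (innerSL ℝ a).toLinearMap
  let φ : V ⊗[ℝ] Q →ₗ[ℝ] V :=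
    (TensorProduct.rid ℝ V).toLinearMap ∘ₗ LinearMap.lTensor V f
  have hφ : ∀ (v : V) (q : Q), φ (v ⊗ₜ[ℝ] q) = ⟪a, q⟫ • v := by
    intro v q; simp [φ, f, TensorProduct.rid_tmul]
  have := congrArg φ key
  rw [map_add, hφ, hφ, map_zero] at this
  have hperp' : ⟪a, J⟫ = 0 := by
    exact hperp X Y J
  rw [hperp', zero_smul, zero_add] at this
  have : (⟪a, a⟫ : ℝ) = 0 := by
    by_contra h0
    exact hu (by
      have := smul_eq_zero.mp this
      rcases this with h | h
      · exact absurd h h0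
      · exact h)
  exact hne' (inner_self_eq_zero.mp this)
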